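/- Let ⊑ be weak trace inclusion on an LTS. Define, for a channel c, the restriction M∖c whose transitions are exactly the transitions of M whose labels are not an input or output on c. If M ⊑ N then M∖c ⊑ N∖c. -/

import Mathlib

/-- Finite execution traces of a labelled transition system. -/
inductive Trace {S A : Type*} (step : S → A → S → Prop) : S → List A → S → Prop
  | nil (s : S) : Trace step s [] s
  | cons {s : S} {a : A} {s' : S} {t : List A} {s'' : S} :
      step s a s' → Trace step s' t s'' → Trace step s (a :: t) s''

/-- Weak traces: τ-transitions may be freely interleaved, and τ-actions occurring
in the trace may be absorbed. -/
inductive WTrace {S A : Type*} (step : S → A → S → Prop) (τ : A) : S → List A → S → Prop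
  | nil (s : S) : WTrace step τ s [] s
  | tau {s s' : S} {t : List A} {s'' : S} :
      step s τ s' → WTrace step τ s' t s'' → WTrace step τ s t s''
  | skip {s : S} {t : List A} {s'' : S} :
      WTrace step τ s t s'' → WTrace step τ s (τ :: t) s''
  | act {s : S} {a : A} {s' : S} {t : List A} {s'' : S} :
      a ≠ τ → step s a s' → WTrace step τ s' t s'' → WTrace step τ s (a :: t) s''

/-- The trace preorder: every trace of `M` is a weak trace of `N`. -/
def TracePre {S A : Type*} (step : S → A → S → Prop) (τ : A) (M N : S) : Prop :=
  ∀ t M', Trace step M t M' → ∃ N', WTrace step τ N t N'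


private lemma trace_restrict_unrestrict {S A : Type*} {step : S → A → S → Prop}
    {P : A → Prop} {s t s''} (h : Trace (fun s a s' => step s a s' ∧ ¬ P a) s t s'') :
    Trace step s t s'' ∧ ∀ a ∈ t, ¬ P a := by
  induction h with
  | nil s => exact ⟨Trace.nil s, by simp⟩
  | cons hs _ ih =>
    exact ⟨Trace.cons hs.1 ih.1, by
      intro a ha
      rcases List.mem_cons.mp ha with rfl | ha
      · exact hs.2
      · exact ih.2 a ha⟩

private lemma wtrace_restrict {S A : Type*} {step : S → A → S → Prop} {τ : A}
    {P : A → Prop} (hτ : ¬ P τ) {s t s''} (h : WTrace step τ s t s'')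
    (ht : ∀ a ∈ t, ¬ P a) :
    WTrace (fun s a s' => step s a s' ∧ ¬ P a) τ s t s'' := by
  induction h with
  | nil s => exact WTrace.nil s
  | tau hs _ ih => exact WTrace.tau ⟨hs, hτ⟩ (ih ht)
  | skip _ ih => exact WTrace.skip (ih fun a ha => ht a (List.mem_cons_of_mem _ ha))
  | act hne hs _ ih =>
    exact WTrace.act hne ⟨hs, ht _ List.mem_cons_self⟩
      (ih fun a ha => ht a (List.mem_cons_of_mem _ ha))

/-- Compositionality under channel restriction: the restriction `M∖c` removes exactly
the transitions whose labels are inputs/outputs on channel `c` (τ is never such a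
label).  If `M ⊑ N` then `M∖c ⊑ N∖c`. -/
theorem stmt_12 {S A : Type*} (step : S → A → S → Prop) (τ : A)
    (isOnChan : A → Prop) (hτ : ¬ isOnChan τ)
    (M N : S) (h : TracePre step τ M N) :
    TracePre (fun s a s' => step s a s' ∧ ¬ isOnChan a) τ M N := by
  intro t M' htr
  obtain ⟨htr', hmem⟩ := trace_restrict_unrestrict htr
  obtain ⟨N', hN'⟩ := h t M' htr'
  exact ⟨N', wtrace_restrict hτ hN' hmem⟩
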